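/- Let n be an odd positive integer and w = max(ν_2(n-1), ν_2(n+1)), and let a_1 denote the coefficient of x in T_n(x). Then 2^w divides a_1 - 1. -/

import Mathlib

open Polynomial Polynomial.Chebyshev

lemma U_eval_zero_two_mul : ∀ k : ℤ, (U ℤ (2 * k)).eval 0 = (if Even k then 1 else -1) := by
  have hstep : ∀ m : ℤ, (U ℤ (m + 2)).eval 0 = -(U ℤ m).eval 0 := by
    intro m
    rw [U_add_two]
    simp
  intro k
  induction k using Int.induction_on with
  | zero => simp [U_zero]
  | succ k ih =>
    rw [show (2 : ℤ) * (k + 1) = 2 * k + 2 by ring, hstep, ih]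
    by_cases h : Even k <;> simp [h, parity_simps]
  | pred k ih =>
    have h := hstep (2 * (-(k:ℤ) - 1))
    rw [show (2 : ℤ) * (-(k:ℤ) - 1) + 2 = 2 * (-(k:ℤ)) by ring, ih] at h
    have h2 : (U ℤ (2 * (-(k:ℤ) - 1))).eval 0 = -(if Even (-(k:ℤ)) then 1 else -1) := by
      linarith [h]
    rw [h2]
    have hpar : Even (-(k:ℤ) - 1) ↔ ¬ Even (-(k:ℤ)) := by
      simp [Int.even_sub, parity_simps]
    by_cases he : Even (-(k:ℤ)) <;> simp [he, hpar]

lemma val2_le_one {a : ℤ} (ha : a ≠ 0) (h : ¬ ((4:ℤ) ∣ a)) : padicValInt 2 a ≤ 1 := by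
  by_contra hc
  push_neg at hc
  have : ((2:ℕ):ℤ) ^ 2 ∣ a := by
    rw [padicValInt_dvd_iff]
    exact Or.inr hc
  norm_num at this
  exact h this

lemma two_le_val2 {a : ℤ} (ha : a ≠ 0) (h : (4:ℤ) ∣ a) : 2 ≤ padicValInt 2 a := by
  have : ((2:ℕ):ℤ) ^ 2 ∣ a := by norm_num; exact h
  rw [padicValInt_dvd_iff] at this
  tauto

lemma pow_val2_dvd (a : ℤ) : (2:ℤ) ^ padicValInt 2 a ∣ a := by
  have := padicValInt_dvd (p := 2) a
  norm_num at this
  exact this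

/-- Let `n` be an odd positive integer, `w = max (ν₂ (n - 1)) (ν₂ (n + 1))`, and let `a₁` be
the coefficient of `x` in `T_n(x)`. Then `2 ^ w` divides `a₁ - 1`. -/
theorem two_pow_dvd_linear_coeff_sub_one (n : ℤ) (hn : 0 < n) (hodd : Odd n)
    (w : ℕ) (hw : w = max (padicValInt 2 (n - 1)) (padicValInt 2 (n + 1))) :
    (2 : ℤ) ^ w ∣ (T ℤ n).coeff 1 - 1 := by
  obtain ⟨k, hk⟩ := hodd
  have hcoeff : (T ℤ n).coeff 1 = n * (if Even k then 1 else -1) := by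
    have hd := T_derivative_eq_U (R := ℤ) n
    have h1 : (T ℤ n).coeff 1 = (derivative (T ℤ n)).coeff 0 := by
      simp [coeff_derivative]
    rw [h1, hd, show n - 1 = 2 * k by omega, coeff_zero_eq_eval_zero]
    simp [U_eval_zero_two_mul k]
  by_cases he : Even k
  · -- n ≡ 1 mod 4, a₁ = n
    rw [hcoeff, if_pos he, mul_one]
    by_cases h1 : n = 1
    · simp [h1]
    · have hne : n - 1 ≠ 0 := by omega
      have hne' : n + 1 ≠ 0 := by omega
      obtain ⟨j, hj⟩ := he
      have h4 : (4:ℤ) ∣ n - 1 := ⟨j, by omega⟩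
      have h4' : ¬ ((4:ℤ) ∣ n + 1) := by omega
      have hwle : w = padicValInt 2 (n - 1) := by
        rw [hw, max_eq_left]
        exact le_trans (val2_le_one hne' h4') (by linarith [two_le_val2 hne h4])
      rw [hwle]
      exact pow_val2_dvd _
  · -- n ≡ 3 mod 4, a₁ = -n
    rw [hcoeff, if_neg he, mul_neg_one]
    have hk1 : Odd k := Int.not_even_iff_odd.mp he
    obtain ⟨j, hj⟩ := hk1
    have hne : n - 1 ≠ 0 := by omega
    have hne' : n + 1 ≠ 0 := by omega
    have h4 : (4:ℤ) ∣ n + 1 := ⟨j + 1, by omega⟩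
    have h4' : ¬ ((4:ℤ) ∣ n - 1) := by omega
    have hwle : w = padicValInt 2 (n + 1) := by
      rw [hw, max_eq_right]
      exact le_trans (val2_le_one hne h4') (by linarith [two_le_val2 hne' h4])
    rw [hwle]
    have := pow_val2_dvd (n + 1)
    have h : -n - 1 = -(n + 1) := by ring
    rw [h]
    exact this.neg_right
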